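/- At most one of the two angles t + 1/3 and t − 1/3 can be periodic under the tripling map, for any t ∈ ℝ/ℤ. -/
import Mathlib

lemma nsmul_fix_pow {G : Type*} [AddMonoid G] (a : ℕ) (x : G) (h : a • x = x) :
    ∀ m : ℕ, a ^ m • x = x := by
  intro m
  induction m with
  | zero => simp
  | succ k ih => rw [pow_succ, mul_nsmul, ih, h]

lemma third_nsmul_zero (N : ℕ) (hN : 1 ≤ N) :
    (3 ^ N : ℕ) • ((1 / 3 : ℝ) : UnitAddCircle) = 0 := by
  have key : (((3 ^ N : ℕ) • (1 / 3 : ℝ) : ℝ) : UnitAddCircle) = 0 := by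
    rw [AddCircle.coe_eq_zero_iff]
    refine ⟨3 ^ (N - 1), ?_⟩
    have h3 : (3 : ℝ) ^ N = 3 ^ (N - 1) * 3 := by
      rw [← pow_succ]
      congr 1
      omega
    simp only [zsmul_eq_mul, nsmul_eq_mul, mul_one]
    push_cast
    rw [h3]
    ring
  calc (3 ^ N : ℕ) • ((1 / 3 : ℝ) : UnitAddCircle)
      = (((3 ^ N : ℕ) • (1 / 3 : ℝ) : ℝ) : UnitAddCircle) := by
        exact AddCircle.coe_nsmul _
    _ = 0 := key

/-- For any `t ∈ ℝ/ℤ`, at most one of `t + 1/3` and `t - 1/3` is periodic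
under the tripling map. -/
theorem at_most_one_shift_periodic (t : UnitAddCircle) :
    ¬ ((∃ n : ℕ, 1 ≤ n ∧ (3 ^ n : ℕ) • (t + ((1 / 3 : ℝ) : UnitAddCircle))
          = t + ((1 / 3 : ℝ) : UnitAddCircle)) ∧
       (∃ n : ℕ, 1 ≤ n ∧ (3 ^ n : ℕ) • (t - ((1 / 3 : ℝ) : UnitAddCircle))
          = t - ((1 / 3 : ℝ) : UnitAddCircle))) := by
  rintro ⟨⟨n, hn, hpn⟩, ⟨m, hm, hpm⟩⟩
  set c : UnitAddCircle := ((1 / 3 : ℝ) : UnitAddCircle) with hc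
  have hN : 1 ≤ n * m := Nat.one_le_iff_ne_zero.mpr (by positivity)
  have h1 : (3 ^ (n * m) : ℕ) • (t + c) = t + c := by
    rw [pow_mul]
    exact nsmul_fix_pow _ _ hpn m
  have h2 : (3 ^ (n * m) : ℕ) • (t - c) = t - c := by
    rw [Nat.mul_comm, pow_mul]
    exact nsmul_fix_pow _ _ hpm n
  have hc0 : (3 ^ (n * m) : ℕ) • c = 0 := third_nsmul_zero _ hN
  rw [smul_add, hc0, add_zero] at h1
  rw [smul_sub, hc0, sub_zero] at h2
  have heq : t + c = t + (-c) := by rw [← sub_eq_add_neg, ← h1, ← h2]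
  have hcc : c = -c := add_left_cancel heq
  have h2c : c + c = 0 := by rw [add_eq_zero_iff_eq_neg]; exact hcc
  have hz0 : ((1 / 3 : ℝ) : UnitAddCircle) + ((1 / 3 : ℝ) : UnitAddCircle) = 0 := h2c
  rw [← AddCircle.coe_add, AddCircle.coe_eq_zero_iff] at hz0
  obtain ⟨z, hz⟩ := hz0
  rw [zsmul_eq_mul, mul_one] at hz
  rcases le_or_gt z 0 with h | h
  · have : (z : ℝ) ≤ 0 := by exact_mod_cast h
    linarith
  · have : (1 : ℝ) ≤ z := by exact_mod_cast h
    linarith
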